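/- arXiv:2105.03139 — 5 statements merged into one kernel-verified Lean document; each statement's English description precedes it below -/
import Mathlib

section
/- Let S = (s_1, ..., s_N) be a sequence of detections where each s_i is independently a true positive with probability p_i. Define AP(S) as the average over n of the precision at the n-th true positive (precision at rank k is the number of true positives among the first k divided by k). If there exist indices m < n with p_m < p_n, then swapping s_m and s_n (i.e., swapping p_m and p_n) does not decrease the expected AP. -/
open Finset

/-- Number of true detections among the first `k+1` (ranks `1..k+1`) entries. -/
def prefCount {N : ℕ} (b : Fin N → Bool) (k : Fin N) : ℕ :=
  (Finset.univ.filter (fun j : Fin N => j ≤ k ∧ b j = true)).card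

/-- Total number of true detections. -/
def numTrue {N : ℕ} (b : Fin N → Bool) : ℕ :=
  (Finset.univ.filter (fun j : Fin N => b j = true)).card

/-- Average precision of a ranked binary detection sequence (0 if no true positives). -/
noncomputable def AP {N : ℕ} (b : Fin N → Bool) : ℝ :=
  if numTrue b = 0 then 0 else
    (1 / (numTrue b : ℝ)) *
      ∑ k ∈ Finset.univ.filter (fun k : Fin N => b k = true),
        (prefCount b k : ℝ) / ((k : ℕ) + 1)

/-- Probability of outcome `b` for independent Bernoulli detections with parameters `p`. -/
noncomputable def outcomeWeight {N : ℕ} (p : Fin N → ℝ) (b : Fin N → Bool) : ℝ :=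
  ∏ i, if b i then p i else 1 - p i

/-- Expected average precision of independent Bernoulli detections. -/
noncomputable def eAP {N : ℕ} (p : Fin N → ℝ) : ℝ :=
  ∑ b : Fin N → Bool, outcomeWeight p b * AP b

noncomputable def pairSum {N : ℕ} (b : Fin N → Bool) : ℝ :=
  ∑ q ∈ (Finset.univ : Finset (Fin N × Fin N)).filter
      (fun q => q.1 ≤ q.2 ∧ b q.1 = true ∧ b q.2 = true),
    1 / ((q.2 : ℕ) + 1)


lemma sum_eq_pairSum {N : ℕ} (b : Fin N → Bool) :
    ∑ k ∈ Finset.univ.filter (fun k : Fin N => b k = true),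
      (prefCount b k : ℝ) / ((k : ℕ) + 1) = pairSum b := by
  unfold pairSum prefCount
  rw [Finset.sum_filter]
  rw [Finset.sum_filter]
  rw [Fintype.sum_prod_type_right]
  apply Finset.sum_congr rfl
  intro k _
  by_cases hk : b k = true
  · simp only [hk, if_true]
    rw [Finset.card_eq_sum_ones, ← Finset.sum_filter]
    push_cast
    rw [Finset.sum_div]
    simp [Finset.sum_ite, Finset.sum_filter, ite_and]
  · simp [hk]


lemma numTrue_comp {N : ℕ} (b : Fin N → Bool) (σ : Equiv.Perm (Fin N)) :
    numTrue (b ∘ σ) = numTrue b := by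
  unfold numTrue
  apply Finset.card_bij (fun j _ => σ j)
  · intro a ha; simp at ha ⊢; exact ha
  · intro a _ a2 _ h; exact σ.injective h
  · intro c hc; exact ⟨σ.symm c, by simpa using hc, by simp⟩

set_option maxHeartbeats 2000000 in
lemma key_pairSum {N : ℕ} (b : Fin N → Bool) (m n : Fin N) (hmn : m < n)
    (hbm : b m = true) (hbn : b n = false) :
    pairSum (b ∘ Equiv.swap m n) ≤ pairSum b := by
  unfold pairSum
  set σ := Equiv.swap m n with hσ
  set φ : Fin N × Fin N → Fin N × Fin N := fun q =>
    if σ q.1 ≤ σ q.2 then (σ q.1, σ q.2) else (σ q.2, σ q.1) with hφ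
  set P' : Finset (Fin N × Fin N) := (Finset.univ : Finset (Fin N × Fin N)).filter
      (fun q => q.1 ≤ q.2 ∧ (b ∘ σ) q.1 = true ∧ (b ∘ σ) q.2 = true) with hP'
  set P : Finset (Fin N × Fin N) := (Finset.univ : Finset (Fin N × Fin N)).filter
      (fun q => q.1 ≤ q.2 ∧ b q.1 = true ∧ b q.2 = true) with hP
  -- facts about elements of P'
  have hne : ∀ q ∈ P', q.1 ≠ m ∧ q.2 ≠ m := by
    intro q hq
    rw [hP', Finset.mem_filter] at hq
    obtain ⟨-, -, h1, h2⟩ := hq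
    constructor
    · intro h; rw [h] at h1; simp [hσ, Equiv.swap_apply_left, hbn] at h1
    · intro h; rw [h] at h2; simp [hσ, Equiv.swap_apply_left, hbn] at h2
  have hle : ∀ x : Fin N, x ≠ m → σ x ≤ x := by
    intro x hx
    by_cases hxn : x = n
    · subst hxn; rw [hσ, Equiv.swap_apply_right]; exact le_of_lt hmn
    · rw [hσ, Equiv.swap_apply_of_ne_of_ne hx hxn]
  have hφ2 : ∀ q ∈ P', (φ q).2 ≤ q.2 := by
    intro q hq
    obtain ⟨h1, h2⟩ := hne q hq
    rw [hP', Finset.mem_filter] at hq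
    obtain ⟨-, h12, -, -⟩ := hq
    have a1 : σ q.1 ≤ q.2 := le_trans (hle q.1 h1) h12
    have a2 : σ q.2 ≤ q.2 := hle q.2 h2
    rw [hφ]
    by_cases h : σ q.1 ≤ σ q.2 <;> simp [h, a1, a2]
  have himg : ∀ q ∈ P', φ q ∈ P := by
    intro q hq
    rw [hP', Finset.mem_filter] at hq
    obtain ⟨-, -, h1, h2⟩ := hq
    simp only [Function.comp] at h1 h2
    rw [hP, Finset.mem_filter, hφ]
    by_cases h : σ q.1 ≤ σ q.2
    · simp [h, h1, h2]
    · simp [h, h1, h2, le_of_not_ge h]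
  have hinj : Set.InjOn φ ↑P' := by
    intro q hq r hr heq
    simp only [Finset.mem_coe, hP', Finset.mem_filter] at hq hr
    have hq' : q.1 ≤ q.2 := hq.2.1
    have hr' : r.1 ≤ r.2 := hr.2.1
    have : (σ q.1 = σ r.1 ∧ σ q.2 = σ r.2) ∨ (σ q.1 = σ r.2 ∧ σ q.2 = σ r.1) := by
      by_cases h1 : σ q.1 ≤ σ q.2 <;> by_cases h2 : σ r.1 ≤ σ r.2 <;>
        simp only [hφ, h1, h2, if_true, if_false, Prod.ext_iff] at heq <;>
        tauto
    rcases this with ⟨e1, e2⟩ | ⟨e1, e2⟩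
    · exact Prod.ext (σ.injective e1) (σ.injective e2)
    · have e1' : (q.1 : ℕ) = (r.2 : ℕ) := congrArg Fin.val (σ.injective e1)
      have e2' : (q.2 : ℕ) = (r.1 : ℕ) := congrArg Fin.val (σ.injective e2)
      have hq'' : (q.1 : ℕ) ≤ (q.2 : ℕ) := hq'
      have hr'' : (r.1 : ℕ) ≤ (r.2 : ℕ) := hr'
      refine Prod.ext (Fin.ext ?_) (Fin.ext ?_) <;> omega
  calc (∑ q ∈ P', (1 / ((q.2 : ℕ) + 1) : ℝ))
      ≤ ∑ q ∈ P', (1 / (((φ q).2 : ℕ) + 1) : ℝ) := by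
        apply Finset.sum_le_sum
        intro q hq
        apply one_div_le_one_div_of_le (by positivity)
        have h' : ((φ q).2 : ℕ) ≤ (q.2 : ℕ) := hφ2 q hq
        gcongr

    _ = ∑ x ∈ P'.image φ, (1 / ((x.2 : ℕ) + 1) : ℝ) :=
        (Finset.sum_image (f := fun x : Fin N × Fin N => (1 : ℝ) / ((x.2 : ℕ) + 1)) (fun a ha c hc h => hinj ha hc h)).symm
    _ ≤ ∑ x ∈ P, (1 / ((x.2 : ℕ) + 1) : ℝ) := by
        apply Finset.sum_le_sum_of_subset_of_nonneg
        · intro x hx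
          obtain ⟨q, hq, rfl⟩ := Finset.mem_image.mp hx
          exact himg q hq
        · intro x _ _; positivity

lemma AP_swap_le {N : ℕ} (b : Fin N → Bool) (m n : Fin N) (hmn : m < n)
    (hbm : b m = true) (hbn : b n = false) :
    AP (b ∘ Equiv.swap m n) ≤ AP b := by
  have hT : numTrue b ≠ 0 := by
    unfold numTrue
    simp only [ne_eq, Finset.card_eq_zero, Finset.filter_eq_empty_iff, not_forall]
    exact ⟨m, Finset.mem_univ m, by simp [hbm]⟩
  have hT' : numTrue (b ∘ Equiv.swap m n) ≠ 0 := by rw [numTrue_comp]; exact hT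
  unfold AP
  rw [if_neg hT, if_neg hT', numTrue_comp, sum_eq_pairSum, sum_eq_pairSum]
  apply mul_le_mul_of_nonneg_left (key_pairSum b m n hmn hbm hbn)
  positivity


lemma outcomeWeight_comp {N : ℕ} (p : Fin N → ℝ) (m n : Fin N) (b : Fin N → Bool) :
    outcomeWeight (p ∘ Equiv.swap m n) b = outcomeWeight p (b ∘ Equiv.swap m n) := by
  unfold outcomeWeight
  apply Fintype.prod_equiv (Equiv.swap m n)
  intro i
  simp [Equiv.swap_apply_self]


lemma weight_factor {N : ℕ} (p : Fin N → ℝ) (m n : Fin N) (hmn : m ≠ n) (b : Fin N → Bool) :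
    outcomeWeight p b =
      (if b m then p m else 1 - p m) * ((if b n then p n else 1 - p n) *
        ∏ i ∈ (Finset.univ.erase m).erase n, (if b i then p i else 1 - p i)) := by
  unfold outcomeWeight
  rw [← Finset.mul_prod_erase Finset.univ _ (Finset.mem_univ m),
    ← Finset.mul_prod_erase (Finset.univ.erase m) _
      (Finset.mem_erase.mpr ⟨hmn.symm, Finset.mem_univ n⟩)]


lemma weight_swap_factor {N : ℕ} (p : Fin N → ℝ) (m n : Fin N) (hmn : m ≠ n) (b : Fin N → Bool) :
    outcomeWeight p (b ∘ Equiv.swap m n) =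
      (if b n then p m else 1 - p m) * ((if b m then p n else 1 - p n) *
        ∏ i ∈ (Finset.univ.erase m).erase n, (if b i then p i else 1 - p i)) := by
  rw [weight_factor p m n hmn (b ∘ Equiv.swap m n)]
  simp only [Function.comp_apply, Equiv.swap_apply_left, Equiv.swap_apply_right]
  congr 2
  apply Finset.prod_congr rfl
  intro i hi
  simp only [Finset.mem_erase] at hi
  simp [Equiv.swap_apply_of_ne_of_ne hi.2.1 hi.1]

/-- Swapping two detections `m < n` with `p m < p n` does not decrease the expected AP. -/
theorem stmt0 {N : ℕ} (p : Fin N → ℝ) (hp : ∀ i, 0 ≤ p i ∧ p i ≤ 1)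
    (m n : Fin N) (hmn : m < n) (hpmn : p m < p n) :
    eAP p ≤ eAP (p ∘ Equiv.swap m n) := by
  have hne : m ≠ n := ne_of_lt hmn
  set σ := Equiv.swap m n with hσ
  have hss : ∀ b : Fin N → Bool, (b ∘ σ) ∘ σ = b := by
    intro b; funext i; simp [hσ, Equiv.swap_apply_self]
  let e : (Fin N → Bool) ≃ (Fin N → Bool) :=
    ⟨fun b => b ∘ σ, fun b => b ∘ σ, hss, hss⟩
  have h1 : eAP (p ∘ σ) = ∑ b : Fin N → Bool, outcomeWeight p b * AP (b ∘ σ) := by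
    unfold eAP
    rw [Finset.sum_congr rfl (fun b _ => by rw [outcomeWeight_comp p m n b])]
    exact Fintype.sum_equiv e _ _ (fun b => by
      show outcomeWeight p (b ∘ σ) * AP b = outcomeWeight p (b ∘ σ) * AP ((b ∘ σ) ∘ σ)
      rw [hss b])
  rw [h1]
  unfold eAP
  set F : (Fin N → Bool) → ℝ := fun b => outcomeWeight p b * (AP (b ∘ σ) - AP b) with hF
  have hR : ∀ b : Fin N → Bool,
      0 ≤ ∏ i ∈ (Finset.univ.erase m).erase n, (if b i then p i else 1 - p i) := by
    intro b
    apply Finset.prod_nonneg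
    intro i _
    by_cases h : b i <;> simp [h] <;> [exact (hp i).1; linarith [(hp i).2]]
  have key : ∀ b : Fin N → Bool, 0 ≤ F b + F (b ∘ σ) := by
    intro b
    have hFF : F b + F (b ∘ σ) =
        (outcomeWeight p b - outcomeWeight p (b ∘ σ)) * (AP (b ∘ σ) - AP b) := by
      simp only [hF]; rw [hss b]; ring
    rw [hFF]
    cases hm : b m <;> cases hn : b n
    · have hbs : b ∘ σ = b := by
        funext i
        rcases eq_or_ne i m with rfl | h1
        · show b (σ i) = b i; rw [hσ, Equiv.swap_apply_left, hn, hm]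
        · rcases eq_or_ne i n with rfl | h2
          · show b (σ i) = b i; rw [hσ, Equiv.swap_apply_right, hm, hn]
          · show b (σ i) = b i; rw [hσ, Equiv.swap_apply_of_ne_of_ne h1 h2]
      rw [hbs]; simp
    · -- b m = false, b n = true
      apply mul_nonneg
      · rw [weight_factor p m n hne b, weight_swap_factor p m n hne b, hm, hn]
        norm_num
        nlinarith [hR b]
      · rw [sub_nonneg]
        have hcm : (b ∘ σ) m = true := by show b (σ m) = true; rw [hσ, Equiv.swap_apply_left, hn]
        have hcn : (b ∘ σ) n = false := by show b (σ n) = false; rw [hσ, Equiv.swap_apply_right, hm]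
        have := AP_swap_le (b ∘ σ) m n hmn hcm hcn
        rwa [hss b] at this
    · -- b m = true, b n = false
      have hW : outcomeWeight p b - outcomeWeight p (b ∘ σ) ≤ 0 := by
        rw [weight_factor p m n hne b, weight_swap_factor p m n hne b, hm, hn]
        norm_num
        nlinarith [hR b]
      have hA : AP (b ∘ σ) - AP b ≤ 0 := by
        rw [sub_nonpos]; exact AP_swap_le b m n hmn hm hn
      nlinarith [hW, hA]
    · have hbs : b ∘ σ = b := by
        funext i
        rcases eq_or_ne i m with rfl | h1
        · show b (σ i) = b i; rw [hσ, Equiv.swap_apply_left, hn, hm]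
        · rcases eq_or_ne i n with rfl | h2
          · show b (σ i) = b i; rw [hσ, Equiv.swap_apply_right, hm, hn]
          · show b (σ i) = b i; rw [hσ, Equiv.swap_apply_of_ne_of_ne h1 h2]
      rw [hbs]; simp
  have hsum : 0 ≤ ∑ b : Fin N → Bool, (F b + F (b ∘ σ)) :=
    Finset.sum_nonneg (fun b _ => key b)
  have hre : ∑ b : Fin N → Bool, F (b ∘ σ) = ∑ b : Fin N → Bool, F b :=
    Fintype.sum_equiv e _ _ (fun b => rfl)
  rw [Finset.sum_add_distrib, hre] at hsum
  have hFsum : ∑ b : Fin N → Bool, F b =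
      (∑ b : Fin N → Bool, outcomeWeight p b * AP (b ∘ σ)) -
      ∑ b : Fin N → Bool, outcomeWeight p b * AP b := by
    rw [← Finset.sum_sub_distrib]
    apply Finset.sum_congr rfl
    intro b _
    simp only [hF]; ring
  linarith
end

section
/- The expected AP of a sequence of independent Bernoulli detections is maximized, over all permutations of the sequence, by any permutation that sorts the success probabilities in non-increasing order. -/
open Finset

section Aux

variable {N : ℕ}

lemma comp_swap_comp_swap (b : Fin N → Bool) (m m' : Fin N) :
    (b ∘ ⇑(Equiv.swap m m')) ∘ ⇑(Equiv.swap m m') = b := by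
  funext i
  simp [Function.comp, Equiv.swap_apply_self]

lemma prefCount_comp_swap (b : Fin N → Bool) (m m' k : Fin N)
    (hk : ∀ j : Fin N, j ≤ k → Equiv.swap m m' j ≤ k) :
    prefCount (b ∘ ⇑(Equiv.swap m m')) k = prefCount b k := by
  unfold prefCount
  apply Finset.card_nbij' (fun j => Equiv.swap m m' j) (fun j => Equiv.swap m m' j)
  · intro a ha
    simp only [mem_coe, mem_filter, mem_univ, true_and, Function.comp] at ha ⊢
    exact ⟨hk a ha.1, ha.2⟩
  · intro a ha
    simp only [mem_coe, mem_filter, mem_univ, true_and, Function.comp] at ha ⊢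
    refine ⟨hk a ha.1, ?_⟩
    rw [Equiv.swap_apply_self]
    exact ha.2
  · intro a _
    exact Equiv.swap_apply_self _ _ _
  · intro a _
    exact Equiv.swap_apply_self _ _ _

lemma numTrue_comp_swap (b : Fin N → Bool) (m m' : Fin N) :
    numTrue (b ∘ ⇑(Equiv.swap m m')) = numTrue b := by
  unfold numTrue
  apply Finset.card_nbij' (fun j => Equiv.swap m m' j) (fun j => Equiv.swap m m' j)
  · intro a ha
    simp only [mem_coe, mem_filter, mem_univ, true_and, Function.comp] at ha ⊢
    exact ha
  · intro a ha
    simp only [mem_coe, mem_filter, mem_univ, true_and, Function.comp] at ha ⊢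
    rw [Equiv.swap_apply_self]
    exact ha
  · intro a _
    exact Equiv.swap_apply_self _ _ _
  · intro a _
    exact Equiv.swap_apply_self _ _ _

lemma prefCount_swap_cross (b : Fin N → Bool) (m m' : Fin N) (h : (m' : ℕ) = (m : ℕ) + 1)
    (hbm' : b m' = false) :
    prefCount (b ∘ ⇑(Equiv.swap m m')) m' = prefCount b m := by
  unfold prefCount
  apply Finset.card_nbij' (fun j => Equiv.swap m m' j) (fun j => Equiv.swap m m' j)
  · intro a ha
    simp only [mem_coe, mem_filter, mem_univ, true_and, Function.comp] at ha ⊢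
    rcases eq_or_ne a m with rfl | h1
    · rw [Equiv.swap_apply_left] at ha ⊢
      rw [hbm'] at ha
      exact absurd ha.2 (by simp)
    · rcases eq_or_ne a m' with rfl | h2
      · rw [Equiv.swap_apply_right] at ha ⊢
        exact ⟨le_refl m, ha.2⟩
      · rw [Equiv.swap_apply_of_ne_of_ne h1 h2] at ha ⊢
        refine ⟨?_, ha.2⟩
        have := ha.1
        rw [Fin.le_def] at this ⊢
        have h2' : (a : ℕ) ≠ (m' : ℕ) := fun hh => h2 (Fin.ext hh)
        omega
  · intro a ha
    simp only [mem_coe, mem_filter, mem_univ, true_and, Function.comp] at ha ⊢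
    rcases eq_or_ne a m with rfl | h1
    · rw [Equiv.swap_apply_left, Equiv.swap_apply_right]
      exact ⟨le_refl m', ha.2⟩
    · have h2 : a ≠ m' := by
        intro rfl'
        have := ha.1
        rw [Fin.le_def] at this
        omega
      rw [Equiv.swap_apply_of_ne_of_ne h1 h2, Equiv.swap_apply_of_ne_of_ne h1 h2]
      refine ⟨?_, ha.2⟩
      have := ha.1
      rw [Fin.le_def] at this ⊢
      omega
  · intro a _
    exact Equiv.swap_apply_self _ _ _
  · intro a _
    exact Equiv.swap_apply_self _ _ _

lemma filter_comp_swap (b : Fin N → Bool) (m m' : Fin N) (hne : m ≠ m')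
    (hbm : b m = true) (hbm' : b m' = false) :
    Finset.univ.filter (fun k : Fin N => (b ∘ ⇑(Equiv.swap m m')) k = true)
      = insert m' ((Finset.univ.filter fun k : Fin N => b k = true).erase m) := by
  ext k
  simp only [mem_filter, mem_insert, mem_erase, mem_univ, true_and, Function.comp]
  rcases eq_or_ne k m' with rfl | h1
  · rw [Equiv.swap_apply_right, hbm]
    simp
  · rcases eq_or_ne k m with rfl | h2
    · rw [Equiv.swap_apply_left, hbm']
      simp [hne, Ne.symm h1]
    · rw [Equiv.swap_apply_of_ne_of_ne h2 h1]
      simp [h1, h2]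

lemma AP_comp_swap_le (b : Fin N → Bool) (m m' : Fin N) (h : (m' : ℕ) = (m : ℕ) + 1)
    (hbm : b m = true) (hbm' : b m' = false) :
    AP (b ∘ ⇑(Equiv.swap m m')) ≤ AP b := by
  have hne : m ≠ m' := by
    intro rfl'
    omega
  have hmem : m ∈ Finset.univ.filter (fun k : Fin N => b k = true) := by
    simp [hbm]
  have hT : numTrue b ≠ 0 := Finset.card_ne_zero_of_mem hmem
  have hT' : numTrue (b ∘ ⇑(Equiv.swap m m')) = numTrue b := numTrue_comp_swap b m m'
  unfold AP
  rw [hT', if_neg hT, if_neg hT]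
  have hTpos : (0:ℝ) ≤ 1 / (numTrue b : ℝ) := by positivity
  apply mul_le_mul_of_nonneg_left _ hTpos
  rw [filter_comp_swap b m m' hne hbm hbm']
  nth_rewrite 2 [show Finset.univ.filter (fun k : Fin N => b k = true)
      = insert m ((Finset.univ.filter fun k : Fin N => b k = true).erase m) from
      (Finset.insert_erase hmem).symm]
  have hmF : m ∉ (Finset.univ.filter fun k : Fin N => b k = true).erase m :=
    Finset.notMem_erase m _
  have hm'F : m' ∉ (Finset.univ.filter fun k : Fin N => b k = true).erase m := by
    simp [hbm']
  rw [Finset.sum_insert hm'F, Finset.sum_insert hmF]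
  have hsum : ∑ k ∈ (Finset.univ.filter fun k : Fin N => b k = true).erase m,
      (prefCount (b ∘ ⇑(Equiv.swap m m')) k : ℝ) / ((k : ℕ) + 1)
      = ∑ k ∈ (Finset.univ.filter fun k : Fin N => b k = true).erase m,
      (prefCount b k : ℝ) / ((k : ℕ) + 1) := by
    apply Finset.sum_congr rfl
    intro k hk
    simp only [mem_erase, mem_filter, mem_univ, true_and] at hk
    have hk2 : k ≠ m' := by
      intro hkm'
      rw [hkm', hbm'] at hk
      simp at hk
    congr 2
    apply prefCount_comp_swap
    intro j hj
    rcases eq_or_ne j m with rfl | hj1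
    · rw [Equiv.swap_apply_left, Fin.le_def]
      rw [Fin.le_def] at hj
      have : (j : ℕ) ≠ (k : ℕ) := fun hh => hk.1 (Fin.ext hh).symm
      omega
    · rcases eq_or_ne j m' with rfl | hj2
      · rw [Equiv.swap_apply_right, Fin.le_def]
        rw [Fin.le_def] at hj
        omega
      · rw [Equiv.swap_apply_of_ne_of_ne hj1 hj2]
        exact hj
  rw [hsum, prefCount_swap_cross b m m' h hbm']
  apply add_le_add_left
  apply div_le_div_of_nonneg_left
  · positivity
  · positivity
  · rw [h]
    push_cast
    linarith

lemma outcomeWeight_comp_perm (q : Fin N → ℝ) (b : Fin N → Bool) (e : Equiv.Perm (Fin N)) :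
    outcomeWeight (q ∘ ⇑e) (b ∘ ⇑e) = outcomeWeight q b := by
  unfold outcomeWeight
  simp only [Function.comp]
  exact Equiv.prod_comp e (fun j => if b j then q j else 1 - q j)

lemma eAP_comp_perm (q : Fin N → ℝ) (e : Equiv.Perm (Fin N)) :
    eAP (q ∘ ⇑e) = ∑ b : Fin N → Bool, outcomeWeight q b * AP (b ∘ ⇑e) := by
  unfold eAP
  rw [← Equiv.sum_comp (Equiv.arrowCongr e (Equiv.refl Bool))
      (fun b : Fin N → Bool => outcomeWeight q b * AP (b ∘ ⇑e))]
  refine Finset.sum_congr rfl fun b _ => ?_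
  have hb : (Equiv.arrowCongr e (Equiv.refl Bool)) b ∘ ⇑e = b := by
    funext i
    simp [Equiv.arrowCongr]
  have h1 : outcomeWeight (q ∘ ⇑e) b
      = outcomeWeight q ((Equiv.arrowCongr e (Equiv.refl Bool)) b) := by
    rw [← outcomeWeight_comp_perm q ((Equiv.arrowCongr e (Equiv.refl Bool)) b) e, hb]
  rw [hb, h1]


lemma eAP_le_eAP_comp_swap (q : Fin N → ℝ) (hq : ∀ i, 0 ≤ q i ∧ q i ≤ 1)
    (m m' : Fin N) (h : (m' : ℕ) = (m : ℕ) + 1) (hle : q m ≤ q m') :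
    eAP q ≤ eAP (q ∘ ⇑(Equiv.swap m m')) := by
  classical
  set e := Equiv.swap m m' with hedef
  have hne : m ≠ m' := by intro rfl'; omega
  have hne' : m' ≠ m := Ne.symm hne
  have hee : ∀ b : Fin N → Bool, (b ∘ ⇑e) ∘ ⇑e = b := fun b => comp_swap_comp_swap b m m'
  set C : (Fin N → Bool) → ℝ :=
    fun b => ∏ i ∈ (Finset.univ.erase m).erase m', (if b i then q i else 1 - q i) with hCdef
  have hCnonneg : ∀ b, 0 ≤ C b := by
    intro b
    apply Finset.prod_nonneg
    intro i _
    rcases hq i with ⟨h0, h1⟩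
    split <;> linarith
  have hprod : ∀ b : Fin N → Bool,
      outcomeWeight q b
        = (if b m then q m else 1 - q m) * ((if b m' then q m' else 1 - q m') * C b) := by
    intro b
    unfold outcomeWeight
    rw [← Finset.mul_prod_erase Finset.univ _ (Finset.mem_univ m)]
    congr 1
    rw [← Finset.mul_prod_erase (Finset.univ.erase m) _
        (Finset.mem_erase.mpr ⟨hne', Finset.mem_univ m'⟩)]
  have hCswap : ∀ b : Fin N → Bool, C (b ∘ ⇑e) = C b := by
    intro b
    apply Finset.prod_congr rfl
    intro i hi
    simp only [Finset.mem_erase] at hi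
    simp only [Function.comp, hedef, Equiv.swap_apply_of_ne_of_ne hi.2.1 hi.1]
  have key : ∀ b : Fin N → Bool,
      0 ≤ outcomeWeight q b * (AP (b ∘ ⇑e) - AP b)
        + outcomeWeight q (b ∘ ⇑e) * (AP b - AP (b ∘ ⇑e)) := by
    intro b
    have hfac : outcomeWeight q b * (AP (b ∘ ⇑e) - AP b)
          + outcomeWeight q (b ∘ ⇑e) * (AP b - AP (b ∘ ⇑e))
        = (outcomeWeight q b - outcomeWeight q (b ∘ ⇑e)) * (AP (b ∘ ⇑e) - AP b) := by
      ring
    rw [hfac]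
    have hbem : (b ∘ ⇑e) m = b m' := by
      simp [hedef, Equiv.swap_apply_left]
    have hbem' : (b ∘ ⇑e) m' = b m := by
      simp [hedef, Equiv.swap_apply_right]
    cases hbm : b m <;> cases hbm' : b m'
    · have hbe : b ∘ ⇑e = b := by
        funext i
        rcases eq_or_ne i m with rfl | h1
        · rw [hbem, hbm, hbm']
        · rcases eq_or_ne i m' with rfl | h2
          · rw [hbem', hbm, hbm']
          · simp [hedef, Equiv.swap_apply_of_ne_of_ne h1 h2]
      rw [hbe]
      simp
    · have h1 : outcomeWeight q b - outcomeWeight q (b ∘ ⇑e) = ((q m') - q m) * C b := by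
        rw [hprod b, hprod (b ∘ ⇑e), hbem, hbem', hbm, hbm', hCswap]
        simp only [Bool.false_eq_true, if_true, if_false]
        ring
      have h2 : AP b ≤ AP (b ∘ ⇑e) := by
        have h3 := AP_comp_swap_le (b ∘ ⇑e) m m' h (by rw [hbem, hbm']) (by rw [hbem', hbm])
        rw [hee b] at h3
        exact h3
      apply mul_nonneg
      · rw [h1]
        apply mul_nonneg _ (hCnonneg b)
        linarith
      · linarith
    · have h1 : outcomeWeight q b - outcomeWeight q (b ∘ ⇑e) = (q m - q m') * C b := by
        rw [hprod b, hprod (b ∘ ⇑e), hbem, hbem', hbm, hbm', hCswap]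
        simp only [Bool.false_eq_true, if_true, if_false]
        ring
      have h2 : AP (b ∘ ⇑e) ≤ AP b := AP_comp_swap_le b m m' h hbm hbm'
      rw [h1]
      have hfac1 : (q m - q m') * C b ≤ 0 :=
        mul_nonpos_of_nonpos_of_nonneg (by linarith) (hCnonneg b)
      nlinarith [hfac1, sub_nonpos.mpr h2]
    · have hbe : b ∘ ⇑e = b := by
        funext i
        rcases eq_or_ne i m with rfl | h1
        · rw [hbem, hbm, hbm']
        · rcases eq_or_ne i m' with rfl | h2
          · rw [hbem', hbm, hbm']
          · simp [hedef, Equiv.swap_apply_of_ne_of_ne h1 h2]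
      rw [hbe]
      simp
  have hS : eAP (q ∘ ⇑e) - eAP q
      = ∑ b : Fin N → Bool, outcomeWeight q b * (AP (b ∘ ⇑e) - AP b) := by
    rw [eAP_comp_perm]
    unfold eAP
    rw [← Finset.sum_sub_distrib]
    apply Finset.sum_congr rfl
    intro b _
    ring
  have hS2 : (∑ b : Fin N → Bool, outcomeWeight q b * (AP (b ∘ ⇑e) - AP b))
      = ∑ b : Fin N → Bool, outcomeWeight q (b ∘ ⇑e) * (AP b - AP (b ∘ ⇑e)) := by
    rw [← Equiv.sum_comp (⟨fun b => b ∘ ⇑e, fun b => b ∘ ⇑e, hee, hee⟩ :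
          (Fin N → Bool) ≃ (Fin N → Bool))
        (fun b : Fin N → Bool => outcomeWeight q (b ∘ ⇑e) * (AP b - AP (b ∘ ⇑e)))]
    apply Finset.sum_congr rfl
    intro b _
    show outcomeWeight q b * (AP (b ∘ ⇑e) - AP b)
        = outcomeWeight q ((b ∘ ⇑e) ∘ ⇑e) * (AP (b ∘ ⇑e) - AP ((b ∘ ⇑e) ∘ ⇑e))
    rw [hee b]
  have hsum : 0 ≤ (eAP (q ∘ ⇑e) - eAP q) + (eAP (q ∘ ⇑e) - eAP q) := by
    rw [hS]
    nth_rewrite 2 [hS2]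
    rw [← Finset.sum_add_distrib]
    apply Finset.sum_nonneg
    intro b _
    have := key b
    linarith
  linarith

/-- Number of inversions of a real sequence. -/
noncomputable def invCount (q : Fin N → ℝ) : ℕ :=
  ((Finset.univ : Finset (Fin N × Fin N)).filter
    (fun ij => ij.1 < ij.2 ∧ q ij.1 < q ij.2)).card

lemma swap_lt_of_lt (m m' i j : Fin N) (h : (m' : ℕ) = (m : ℕ) + 1)
    (hij : i < j) (hne : ¬(i = m ∧ j = m')) :
    Equiv.swap m m' i < Equiv.swap m m' j := by
  have hijn : (i : ℕ) < (j : ℕ) := Fin.lt_def.mp hij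
  rw [Fin.lt_def]
  by_cases h1 : i = m
  · by_cases h2 : j = m'
    · exact absurd ⟨h1, h2⟩ hne
    · have hjm : j ≠ m := by
        intro hh
        rw [h1] at hijn
        rw [hh] at hijn
        omega
      have hjne : (j : ℕ) ≠ (m' : ℕ) := fun hh => h2 (Fin.ext hh)
      rw [h1, Equiv.swap_apply_left, Equiv.swap_apply_of_ne_of_ne hjm h2]
      rw [h1] at hijn
      omega
  · by_cases h1' : i = m'
    · have hjm : j ≠ m := by
        intro hh
        rw [h1'] at hijn
        rw [hh] at hijn
        omega
      have hjm' : j ≠ m' := by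
        intro hh
        rw [h1', hh] at hijn
        omega
      rw [h1', Equiv.swap_apply_right, Equiv.swap_apply_of_ne_of_ne hjm hjm']
      rw [h1'] at hijn
      omega
    · rw [Equiv.swap_apply_of_ne_of_ne h1 h1']
      by_cases h2 : j = m
      · rw [h2, Equiv.swap_apply_left]
        rw [h2] at hijn
        omega
      · by_cases h2' : j = m'
        · rw [h2', Equiv.swap_apply_right]
          rw [h2'] at hijn
          have h1n : (i : ℕ) ≠ (m : ℕ) := fun hh => h1 (Fin.ext hh)
          omega
        · rw [Equiv.swap_apply_of_ne_of_ne h2 h2']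
          omega

lemma invCount_swap_lt (q : Fin N → ℝ) (m m' : Fin N) (h : (m' : ℕ) = (m : ℕ) + 1)
    (hlt : q m < q m') : invCount (q ∘ ⇑(Equiv.swap m m')) < invCount q := by
  classical
  set e := Equiv.swap m m' with hedef
  have hmm' : m < m' := by rw [Fin.lt_def]; omega
  set S : Finset (Fin N × Fin N) :=
    (Finset.univ : Finset (Fin N × Fin N)).filter
      (fun ij => ij.1 < ij.2 ∧ q ij.1 < q ij.2) with hSdef
  have hmem : (m, m') ∈ S := by
    rw [hSdef]
    simp only [Finset.mem_filter, Finset.mem_univ, true_and]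
    exact ⟨hmm', hlt⟩
  have hsub : invCount (q ∘ ⇑e) ≤ (S.erase (m, m')).card := by
    unfold invCount
    apply Finset.card_le_card_of_injOn (fun ij => (e ij.1, e ij.2))
    · intro ij hij
      simp only [Finset.mem_coe, Finset.mem_filter, Finset.mem_univ, true_and, Function.comp] at hij
      have hnij : ¬(ij.1 = m ∧ ij.2 = m') := by
        rintro ⟨h1, h2⟩
        rw [h1, h2] at hij
        have e1 : e m = m' := Equiv.swap_apply_left m m'
        have e2 : e m' = m := Equiv.swap_apply_right m m'
        rw [e1, e2] at hij
        exact absurd (hij.2.trans hlt) (lt_irrefl _)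
      simp only [Finset.mem_coe, Finset.mem_erase, Finset.mem_filter, Finset.mem_univ, true_and, hSdef]
      refine ⟨?_, swap_lt_of_lt m m' ij.1 ij.2 h hij.1 hnij, hij.2⟩
      intro hpair
      have h1 : e ij.1 = m := congrArg Prod.fst hpair
      have h2 : e ij.2 = m' := congrArg Prod.snd hpair
      apply hnij
      have h1' : ij.1 = m' := by
        have := congrArg e h1
        rwa [hedef, Equiv.swap_apply_self, Equiv.swap_apply_left] at this
      have h2' : ij.2 = m := by
        have := congrArg e h2
        rwa [hedef, Equiv.swap_apply_self, Equiv.swap_apply_right] at this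
      exfalso
      rw [h1', h2'] at hij
      exact absurd (hij.1.trans hmm') (lt_irrefl _)
    · intro a _ b _ hab
      have h1 : e a.1 = e b.1 := congrArg Prod.fst hab
      have h2 : e a.2 = e b.2 := congrArg Prod.snd hab
      exact Prod.ext (e.injective h1) (e.injective h2)
  calc invCount (q ∘ ⇑e) ≤ (S.erase (m, m')).card := hsub
    _ < S.card := Finset.card_erase_lt_of_mem hmem

lemma antitone_of_adj (q : Fin N → ℝ)
    (hadj : ∀ m m' : Fin N, (m' : ℕ) = (m : ℕ) + 1 → q m' ≤ q m) :
    ∀ i j : Fin N, i ≤ j → q j ≤ q i := by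
  have key : ∀ d : ℕ, ∀ i j : Fin N, (j : ℕ) = (i : ℕ) + d → q j ≤ q i := by
    intro d
    induction d with
    | zero =>
      intro i j hij
      have : j = i := Fin.ext (by omega)
      rw [this]
    | succ d ih =>
      intro i j hij
      have hk : (i : ℕ) + d < N := by
        have := j.isLt
        omega
      have h1 : q j ≤ q ⟨(i : ℕ) + d, hk⟩ := hadj ⟨(i : ℕ) + d, hk⟩ j (by simp [hij]; try omega)
      exact h1.trans (ih i ⟨(i : ℕ) + d, hk⟩ rfl)
  intro i j hij
  rw [Fin.le_def] at hij
  exact key ((j : ℕ) - (i : ℕ)) i j (by omega)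

lemma eq_of_antitone_perm (s : Fin N → ℝ) (π : Equiv.Perm (Fin N))
    (hs : ∀ i j : Fin N, i ≤ j → s j ≤ s i)
    (hq : ∀ i j : Fin N, i ≤ j → s (π j) ≤ s (π i)) :
    s ∘ ⇑π = s := by
  have h1 : Monotone ((fun i => -s i) ∘ ⇑π) := by
    intro a b hab
    simp only [Function.comp, neg_le_neg_iff]
    exact hq a b hab
  have h2 : Monotone ((fun i => -s i) ∘ ⇑(Equiv.refl (Fin N))) := by
    intro a b hab
    simp only [Function.comp, Equiv.refl_apply, neg_le_neg_iff]
    exact hs a b hab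
  have h3 := Tuple.unique_monotone h1 h2
  funext i
  have h4 := congrFun h3 i
  simp only [Function.comp, Equiv.refl_apply, neg_inj] at h4
  exact h4

end Aux

/-- Expected AP is maximized, over all orderings, by any permutation sorting the
success probabilities in non-increasing order. -/
theorem stmt1 {N : ℕ} (p : Fin N → ℝ) (hp : ∀ i, 0 ≤ p i ∧ p i ≤ 1)
    (σ : Equiv.Perm (Fin N)) (hσ : ∀ i j : Fin N, i ≤ j → p (σ j) ≤ p (σ i)) :
    ∀ τ : Equiv.Perm (Fin N), eAP (p ∘ τ) ≤ eAP (p ∘ σ) := by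
  intro τ
  set s : Fin N → ℝ := p ∘ ⇑σ with hsdef
  have hs : ∀ i j : Fin N, i ≤ j → s j ≤ s i := hσ
  have hsb : ∀ i, 0 ≤ s i ∧ s i ≤ 1 := fun i => hp _
  have key : ∀ n : ℕ, ∀ π : Equiv.Perm (Fin N),
      invCount (s ∘ ⇑π) = n → eAP (s ∘ ⇑π) ≤ eAP s := by
    intro n
    induction n using Nat.strong_induction_on with
    | _ n ih =>
      intro π hn
      by_cases hA : ∀ m m' : Fin N, (m' : ℕ) = (m : ℕ) + 1 → (s ∘ ⇑π) m' ≤ (s ∘ ⇑π) m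
      · have hanti := antitone_of_adj (s ∘ ⇑π) hA
        have heq : s ∘ ⇑π = s := eq_of_antitone_perm s π hs hanti
        rw [heq]
      · push_neg at hA
        obtain ⟨m, m', hmm', hlt⟩ := hA
        have hlt' : (s ∘ ⇑π) m < (s ∘ ⇑π) m' := hlt
        have hcomp : (s ∘ ⇑π) ∘ ⇑(Equiv.swap m m') = s ∘ ⇑((Equiv.swap m m').trans π) := rfl
        have step := eAP_le_eAP_comp_swap (s ∘ ⇑π) (fun i => hsb _) m m' hmm' hlt'.le
        have hinv := invCount_swap_lt (s ∘ ⇑π) m m' hmm' hlt'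
        rw [hcomp] at step hinv
        refine step.trans (ih (invCount (s ∘ ⇑((Equiv.swap m m').trans π))) ?_ _ rfl)
        rw [← hn]
        exact hinv
  have hτ : p ∘ ⇑τ = s ∘ ⇑(τ.trans σ.symm) := by
    funext i
    simp [hsdef, Function.comp]
  rw [hτ]
  exact key _ _ rfl
end

section
/- Fix a binary sequence with exactly T ones, and consider two sequences S_1 and S_2 that agree everywhere except that S_1 has a one at position m and a zero at position n (m < n), while S_2 has a zero at position m and a one at position n. Then AP(S_1) ≥ AP(S_2), with strict inequality if T ≥ 1. -/
open Finset

/-- Swapping a true detection at `m` with a false detection at a later position `n`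
(all else equal) does not decrease AP, and strictly increases it when `T ≥ 1`. -/
theorem stmt2 {N : ℕ} (b1 b2 : Fin N → Bool) (m n : Fin N) (hmn : m < n)
    (h1m : b1 m = true) (h1n : b1 n = false)
    (h2m : b2 m = false) (h2n : b2 n = true)
    (hagree : ∀ k : Fin N, k ≠ m → k ≠ n → b1 k = b2 k) :
    AP b2 ≤ AP b1 ∧ (1 ≤ numTrue b1 → AP b2 < AP b1) := by
  have hmnne : m ≠ n := ne_of_lt hmn
  have hmn' : (m : ℕ) < (n : ℕ) := hmn
  have hpc : ∀ (b : Fin N → Bool) (k : Fin N),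
      prefCount b k = ∑ j : Fin N, if j ≤ k ∧ b j = true then 1 else 0 :=
    fun b k => Finset.card_filter _ _
  have hnt : ∀ (b : Fin N → Bool),
      numTrue b = ∑ j : Fin N, if b j = true then 1 else 0 :=
    fun b => Finset.card_filter _ _
  -- numTrue equality
  have hT : numTrue b2 = numTrue b1 := by
    have h : ∀ j : Fin N,
        ((if b2 j = true then 1 else 0) + (if j = m then 1 else 0) : ℕ)
          = (if b1 j = true then 1 else 0) + (if j = n then 1 else 0) := by
      intro j
      by_cases hjm : j = m
      · subst hjm; simp [h1m, h2m, hmnne]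
      by_cases hjn : j = n
      · subst hjn; simp [h1n, h2n, hjm]
      · simp [hagree j hjm hjn, hjm, hjn]
    have hsum := Finset.sum_congr rfl (fun j (_ : j ∈ (univ : Finset (Fin N))) => h j)
    rw [Finset.sum_add_distrib, Finset.sum_add_distrib] at hsum
    simp only [Finset.sum_ite_eq', Finset.mem_univ, if_true] at hsum
    rw [hnt, hnt]
    omega
  -- key pointwise prefCount relation
  have hkey : ∀ k : Fin N,
      prefCount b1 k + (if n ≤ k then 1 else 0)
        = prefCount b2 k + (if m ≤ k then 1 else 0) := by
    intro k
    have h : ∀ j : Fin N,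
        ((if j ≤ k ∧ b1 j = true then 1 else 0)
           + (if j = n then (if n ≤ k then 1 else 0) else 0) : ℕ)
          = (if j ≤ k ∧ b2 j = true then 1 else 0)
           + (if j = m then (if m ≤ k then 1 else 0) else 0) := by
      intro j
      by_cases hjm : j = m
      · subst hjm; simp [h1m, h2m, hmnne]
      by_cases hjn : j = n
      · subst hjn; simp [h1n, h2n, hjm]
      · simp [hagree j hjm hjn, hjm, hjn]
    have hsum := Finset.sum_congr rfl (fun j (_ : j ∈ (univ : Finset (Fin N))) => h j)
    rw [Finset.sum_add_distrib, Finset.sum_add_distrib] at hsum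
    simp only [Finset.sum_ite_eq', Finset.mem_univ, if_true] at hsum
    rw [hpc, hpc]
    exact hsum
  set C : Finset (Fin N) :=
    Finset.univ.filter (fun k : Fin N => k ≠ m ∧ k ≠ n ∧ b1 k = true) with hCdef
  set D : Finset (Fin N) := C.filter (fun k => m < k ∧ k < n) with hDdef
  have hd : D.card = ∑ j : Fin N,
      if j ≠ m ∧ j ≠ n ∧ b1 j = true then (if m < j ∧ j < n then 1 else 0) else 0 := by
    rw [hDdef, Finset.card_filter, hCdef, Finset.sum_filter]
  have k1 : prefCount b1 m = prefCount b2 m + 1 := by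
    have h := hkey m
    rw [if_neg (not_le_of_gt hmn), if_pos (le_refl m)] at h
    omega
  have k2 : prefCount b2 n = prefCount b2 m + D.card + 1 := by
    have h : ∀ j : Fin N,
        ((if j ≤ n ∧ b2 j = true then 1 else 0) : ℕ)
          = (if j ≤ m ∧ b2 j = true then 1 else 0)
            + (if j ≠ m ∧ j ≠ n ∧ b1 j = true then (if m < j ∧ j < n then 1 else 0) else 0)
            + (if j = n then 1 else 0) := by
      intro j
      by_cases hjm : j = m
      · subst hjm; simp [h2m, hmnne]
      by_cases hjn : j = n
      · subst hjn; simp [h2n, hjm, not_le_of_gt hmn, le_refl]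
      · have hb := hagree j hjm hjn
        have hjm' : (j : ℕ) ≠ m := fun h => hjm (Fin.ext h)
        have hjn' : (j : ℕ) ≠ n := fun h => hjn (Fin.ext h)
        simp only [hb, hjm, hjn, if_false, Ne, not_false_iff, true_and, if_neg hjn]
        by_cases hbj : b2 j = true
        · simp only [hbj, and_true]
          simp only [Fin.le_def, Fin.lt_def]
          split_ifs <;> omega
        · simp [hbj]
    have hsum := Finset.sum_congr rfl (fun j (_ : j ∈ (univ : Finset (Fin N))) => h j)
    rw [Finset.sum_add_distrib, Finset.sum_add_distrib] at hsum
    simp only [Finset.sum_ite_eq', Finset.mem_univ, if_true] at hsum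
    rw [hpc, hpc, ← hd] at *
    omega
  -- filter decompositions
  have hmC : m ∉ C := by simp [hCdef]
  have hnC : n ∉ C := by simp [hCdef]
  have hA1 : Finset.univ.filter (fun k : Fin N => b1 k = true) = insert m C := by
    ext k
    simp only [Finset.mem_filter, Finset.mem_univ, true_and, Finset.mem_insert, hCdef]
    by_cases hk : k = m
    · simp [hk, h1m]
    by_cases hkn : k = n
    · simp [hk, hkn, h1n, Ne.symm hmnne]
    · simp [hk, hkn]
  have hA2 : Finset.univ.filter (fun k : Fin N => b2 k = true) = insert n C := by
    ext k
    simp only [Finset.mem_filter, Finset.mem_univ, true_and, Finset.mem_insert, hCdef]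
    by_cases hk : k = m
    · simp [hk, h2m, hmnne]
    by_cases hkn : k = n
    · simp [hkn, h2n]
    · simp [hk, hkn, hagree k hk hkn]
  -- real sums
  have hq : ∀ k ∈ C, (prefCount b1 k : ℝ) / ((k : ℕ) + 1)
      = (prefCount b2 k : ℝ) / ((k : ℕ) + 1)
        + (if m < k ∧ k < n then (1 : ℝ) / ((k : ℕ) + 1) else 0) := by
    intro k hk
    rw [hCdef, Finset.mem_filter] at hk
    obtain ⟨-, hkm, hkn, -⟩ := hk
    have hkm' : (k : ℕ) ≠ m := fun h => hkm (Fin.ext h)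
    have hkn' : (k : ℕ) ≠ n := fun h => hkn (Fin.ext h)
    have hnat : prefCount b1 k = prefCount b2 k + (if m < k ∧ k < n then 1 else 0) := by
      have h := hkey k
      simp only [Fin.le_def, Fin.lt_def] at h ⊢
      split_ifs at h ⊢ <;> omega
    rw [hnat]
    split_ifs with h
    · push_cast; ring
    · simp
  have hS : (∑ k ∈ C, (prefCount b1 k : ℝ) / ((k : ℕ) + 1))
      = (∑ k ∈ C, (prefCount b2 k : ℝ) / ((k : ℕ) + 1))
        + ∑ k ∈ C, (if m < k ∧ k < n then (1 : ℝ) / ((k : ℕ) + 1) else 0) := by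
    rw [← Finset.sum_add_distrib]
    exact Finset.sum_congr rfl hq
  have hE : (D.card : ℝ) / ((n : ℕ) + 1)
      ≤ ∑ k ∈ C, (if m < k ∧ k < n then (1 : ℝ) / ((k : ℕ) + 1) else 0) := by
    rw [← Finset.sum_filter, ← hDdef]
    have hb : ∀ k ∈ D, (1 : ℝ) / ((n : ℕ) + 1) ≤ 1 / ((k : ℕ) + 1) := by
      intro k hk
      rw [hDdef, Finset.mem_filter] at hk
      have hkn : (k : ℕ) < n := hk.2.2
      apply one_div_le_one_div_of_le
      · positivity
      · have : (k : ℕ) + 1 ≤ (n : ℕ) + 1 := by omega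
        exact_mod_cast this
    calc (D.card : ℝ) / ((n : ℕ) + 1) = ∑ _k ∈ D, (1 : ℝ) / ((n : ℕ) + 1) := by
          rw [Finset.sum_const, nsmul_eq_mul]; ring
      _ ≤ ∑ k ∈ D, (1 : ℝ) / ((k : ℕ) + 1) := Finset.sum_le_sum hb
  -- main strict inequality between the sums
  have hmain : (∑ k ∈ Finset.univ.filter (fun k : Fin N => b2 k = true),
        (prefCount b2 k : ℝ) / ((k : ℕ) + 1))
      < ∑ k ∈ Finset.univ.filter (fun k : Fin N => b1 k = true),
        (prefCount b1 k : ℝ) / ((k : ℕ) + 1) := by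
    rw [hA1, hA2, Finset.sum_insert hmC, Finset.sum_insert hnC, hS]
    have e1 : (prefCount b1 m : ℝ) / ((m : ℕ) + 1)
        = ((prefCount b2 m : ℝ) + 1) / ((m : ℕ) + 1) := by rw [k1]; push_cast; ring
    have e2 : (prefCount b2 n : ℝ) / ((n : ℕ) + 1)
        = ((prefCount b2 m : ℝ) + 1) / ((n : ℕ) + 1) + (D.card : ℝ) / ((n : ℕ) + 1) := by
      rw [k2]; push_cast; ring
    have hdiv : ((prefCount b2 m : ℝ) + 1) / ((n : ℕ) + 1)
        < ((prefCount b2 m : ℝ) + 1) / ((m : ℕ) + 1) := by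
      apply div_lt_div_of_pos_left
      · positivity
      · positivity
      · exact_mod_cast Nat.add_lt_add_right hmn' 1
    rw [e1, e2]
    linarith
  -- conclude about AP
  have hT1 : numTrue b1 ≠ 0 := by
    have hm : m ∈ Finset.univ.filter (fun k : Fin N => b1 k = true) := by simp [h1m]
    have := Finset.card_pos.mpr ⟨m, hm⟩
    rw [numTrue]
    omega
  have hT2 : numTrue b2 ≠ 0 := by rw [hT]; exact hT1
  have hAP : AP b2 < AP b1 := by
    rw [AP, AP, if_neg hT1, if_neg hT2, hT]
    apply mul_lt_mul_of_pos_left hmain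
    have : (0 : ℝ) < (numTrue b1 : ℝ) := by
      exact_mod_cast Nat.pos_of_ne_zero hT1
    positivity
  exact ⟨le_of_lt hAP, fun _ => hAP⟩
end

section
/- For a fixed multiset of labels with T ones and N − T zeros, AP(b) is maximized uniquely (as a function of the arrangement) by the non-increasing arrangement, with maximum value 1, and is minimized by the non-decreasing arrangement, with minimum value (1/T) Σ_{i=1}^{T} i/(N − T + i). -/
open Finset

lemma aux_le {T : ℕ} {v : Fin T → ℕ} (hv : StrictMono v) (i : Fin T) : (i:ℕ) ≤ v i := by
  obtain ⟨n, hn⟩ := i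
  induction n with
  | zero => exact Nat.zero_le _
  | succ n ih =>
    have h' : n < T := Nat.lt_of_succ_lt hn
    have h2 := hv (show (⟨n, h'⟩ : Fin T) < ⟨n+1, hn⟩ by simp [Fin.lt_def])
    have h3 := ih h'
    simp only [Fin.val_mk] at *
    omega

lemma aux_ub {T M : ℕ} {v : Fin T → ℕ} (hv : StrictMono v) (hM : ∀ i, v i < M)
    (i : Fin T) : v i ≤ M - T + i := by
  have hu : StrictMono (fun j : Fin T => M - 1 - v j.rev) := by
    intro j k hjk
    show M - 1 - v j.rev < M - 1 - v k.rev
    have h1 : k.rev < j.rev := by simpa using (Fin.rev_lt_rev).2 hjk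
    have h2 := hv h1
    have h3 := hM j.rev
    have h4 := hM k.rev
    have h5 : (k.rev : ℕ) < (j.rev : ℕ) := h1
    omega
  have hle := aux_le hu i.rev
  simp only [Fin.rev_rev] at hle
  have h4 : (i.rev : ℕ) = T - 1 - i := by
    rcases i with ⟨n, hn⟩; simp [Fin.rev]; omega
  have h5 := hM i
  have h6 := i.2
  omega

/-- Over all arrangements of `T ≥ 1` ones and `N - T` zeros, AP is maximized uniquely by
the non-increasing arrangement with maximum value `1`, and minimized by the
non-decreasing arrangement with minimum value `(1/T) Σ_{i=1}^T i / (N - T + i)`. -/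
theorem stmt9 {N T : ℕ} (hT : 1 ≤ T) (b : Fin N → Bool) (hb : numTrue b = T) :
    (AP b ≤ 1 ∧ (AP b = 1 ↔ Antitone b)) ∧
    ((1 / (T : ℝ)) * ∑ i ∈ Finset.Icc 1 T, (i : ℝ) / ((N - T : ℕ) + i) ≤ AP b ∧
      (AP b = (1 / (T : ℝ)) * ∑ i ∈ Finset.Icc 1 T, (i : ℝ) / ((N - T : ℕ) + i) ↔
        Monotone b)) := by
  classical
  set S : Finset (Fin N) := Finset.univ.filter (fun j : Fin N => b j = true) with hSdef
  have hS : S.card = T := hb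
  have hTN : T ≤ N := by
    have := Finset.card_le_univ S
    simpa [hS] using this
  set e := S.orderEmbOfFin hS with he
  have hmem : ∀ i, e i ∈ S := fun i => Finset.orderEmbOfFin_mem S hS i
  set v : Fin T → ℕ := fun i => (e i : ℕ) with hvdef
  have hv : StrictMono v := fun i j h => e.strictMono h
  have hvN : ∀ i, v i < N := fun i => (e i).2
  have hvlb : ∀ i : Fin T, (i:ℕ) ≤ v i := aux_le hv
  have hvub : ∀ i : Fin T, v i ≤ N - T + i := aux_ub hv hvN
  -- S is the image of e
  have hSimg : S = Finset.image (fun i => e i) Finset.univ := by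
    ext x
    simp only [Finset.mem_image, Finset.mem_univ, true_and]
    constructor
    · intro hx
      have hx' : x ∈ Set.range (e : Fin T → Fin N) := by
        rw [Finset.range_orderEmbOfFin]; exact hx
      exact hx'
    · rintro ⟨i, rfl⟩; exact hmem i
  have hinj : Function.Injective (fun i : Fin T => e i) := e.injective
  -- prefCount at e i
  have hpref : ∀ i : Fin T, prefCount b (e i) = (i:ℕ) + 1 := by
    intro i
    have h1 : prefCount b (e i) = (S.filter (· ≤ e i)).card := by
      unfold prefCount
      congr 1
      ext j
      simp [hSdef, and_comm]
    rw [h1, hSimg, Finset.filter_image,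
        Finset.card_image_of_injective _ hinj]
    have h2 : (Finset.univ.filter fun m : Fin T => e m ≤ e i) = Finset.Iic i := by
      ext m; simp [e.le_iff_le]
    rw [h2, Fin.card_Iic]
  have hT0 : (0:ℝ) < (T:ℝ) := by exact_mod_cast hT
  -- AP formula
  have hAP : AP b = (1/(T:ℝ)) * ∑ i : Fin T, ((i:ℕ)+1 : ℝ)/((v i : ℝ)+1) := by
    rw [AP, hb, if_neg (by omega)]
    congr 1
    rw [show (Finset.univ.filter (fun k : Fin N => b k = true)) = S from rfl, hSimg,
        Finset.sum_image (fun x _ y _ h => hinj h)]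
    refine Finset.sum_congr rfl fun i _ => ?_
    rw [hpref i]
    push_cast
    rfl
  have hmemiff : ∀ k : Fin N, (b k = true ↔ ∃ i : Fin T, e i = k) := by
    intro k
    constructor
    · intro hk
      have hk' : k ∈ S := by simp [hSdef, hk]
      rw [hSimg] at hk'
      simpa using hk'
    · rintro ⟨i, rfl⟩
      have h := hmem i
      simp only [hSdef, Finset.mem_filter] at h
      exact h.2
  have key_anti : Antitone b → ∀ i : Fin T, v i = (i:ℕ) := by
    intro hA
    have htrue : ∀ k : Fin N, (k:ℕ) < T → b k = true := by
      intro k hk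
      by_contra hbk
      have hbk' : b k = false := by simpa using hbk
      have hfalse : ∀ y, k ≤ y → b y = false := fun y hy =>
        le_antisymm (hbk' ▸ hA hy) (Bool.false_le _)
      have hsub : S ⊆ Finset.Iio k := by
        intro j hj
        simp only [hSdef, Finset.mem_filter] at hj
        rw [Finset.mem_Iio]
        by_contra h
        push_neg at h
        rw [hfalse j h] at hj
        simp at hj
      have hc := Finset.card_le_card hsub
      rw [hS, Fin.card_Iio] at hc
      omega
    have hf : StrictMono (fun i : Fin T => (⟨(i:ℕ), lt_of_lt_of_le i.2 hTN⟩ : Fin N)) := by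
      intro i j hij
      rw [Fin.mk_lt_mk]
      exact hij
    have hfs : ∀ i : Fin T, (fun i : Fin T => (⟨(i:ℕ), lt_of_lt_of_le i.2 hTN⟩ : Fin N)) i ∈ S := by
      intro i
      simp only [hSdef, Finset.mem_filter, Finset.mem_univ, true_and]
      exact htrue _ i.2
    have hfe := Finset.orderEmbOfFin_unique hS hfs hf
    intro i
    have h7 := congrFun hfe i
    show ((e i : Fin N) : ℕ) = (i:ℕ)
    rw [he, ← h7]
  have anti_of : (∀ i : Fin T, v i = (i:ℕ)) → Antitone b := by
    intro hvi
    have hbk : ∀ k : Fin N, b k = true ↔ (k:ℕ) < T := by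
      intro k
      rw [hmemiff k]
      constructor
      · rintro ⟨i, rfl⟩
        rw [show ((e i : Fin N):ℕ) = v i from rfl, hvi i]
        exact i.2
      · intro hk
        exact ⟨⟨(k:ℕ), hk⟩, Fin.ext (hvi ⟨(k:ℕ),hk⟩)⟩
    intro x y hxy
    cases hy : b y with
    | false => exact Bool.false_le _
    | true =>
      have hx : (x:ℕ) < T := lt_of_le_of_lt (show (x:ℕ) ≤ (y:ℕ) from hxy) ((hbk y).1 hy)
      rw [(hbk x).2 hx]
  have key_mono : Monotone b → ∀ i : Fin T, v i = N - T + (i:ℕ) := by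
    intro hM
    have htrue : ∀ k : Fin N, N - T ≤ (k:ℕ) → b k = true := by
      intro k hk
      by_contra hbk
      have hbk' : b k = false := by simpa using hbk
      have hfalse : ∀ y, y ≤ k → b y = false := fun y hy =>
        le_antisymm (hbk' ▸ hM hy) (Bool.false_le _)
      have hsub : S ⊆ Finset.Ioi k := by
        intro j hj
        simp only [hSdef, Finset.mem_filter] at hj
        rw [Finset.mem_Ioi]
        by_contra h
        push_neg at h
        rw [hfalse j h] at hj
        simp at hj
      have hc := Finset.card_le_card hsub
      rw [hS, Fin.card_Ioi] at hc
      have := k.2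
      omega
    have hf : StrictMono (fun i : Fin T =>
        (⟨N - T + (i:ℕ), by have := i.2; omega⟩ : Fin N)) := by
      intro i j hij
      rw [Fin.mk_lt_mk]
      have : (i:ℕ) < (j:ℕ) := hij
      omega
    have hfs : ∀ i : Fin T, (fun i : Fin T =>
        (⟨N - T + (i:ℕ), by have := i.2; omega⟩ : Fin N)) i ∈ S := by
      intro i
      simp only [hSdef, Finset.mem_filter, Finset.mem_univ, true_and]
      exact htrue _ (Nat.le_add_right _ _)
    have hfe := Finset.orderEmbOfFin_unique hS hfs hf
    intro i
    have h7 := congrFun hfe i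
    show ((e i : Fin N) : ℕ) = N - T + (i:ℕ)
    rw [he, ← h7]
  have mono_of : (∀ i : Fin T, v i = N - T + (i:ℕ)) → Monotone b := by
    intro hvi
    have hbk : ∀ k : Fin N, b k = true ↔ N - T ≤ (k:ℕ) := by
      intro k
      rw [hmemiff k]
      constructor
      · rintro ⟨i, rfl⟩
        rw [show ((e i : Fin N):ℕ) = v i from rfl, hvi i]
        exact Nat.le_add_right _ _
      · intro hk
        have hik : (k:ℕ) - (N - T) < T := by have := k.2; omega
        refine ⟨⟨(k:ℕ) - (N - T), hik⟩, Fin.ext ?_⟩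
        rw [show ((e ⟨(k:ℕ) - (N - T), hik⟩ : Fin N) : ℕ) = v ⟨(k:ℕ) - (N - T), hik⟩ from rfl,
          hvi]
        simp only [Fin.val_mk]
        omega
    intro x y hxy
    cases hx : b x with
    | false => exact Bool.false_le _
    | true =>
      have hy : N - T ≤ (y:ℕ) := le_trans ((hbk x).1 hx) (show (x:ℕ) ≤ (y:ℕ) from hxy)
      rw [(hbk y).2 hy]
  -- term bounds
  have hterm_le : ∀ i : Fin T, ((i:ℕ)+1 : ℝ)/((v i : ℝ)+1) ≤ 1 := by
    intro i
    rw [div_le_one (by positivity)]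
    have h := hvlb i
    have h' : ((i:ℕ):ℝ) ≤ ((v i : ℕ):ℝ) := by exact_mod_cast h
    linarith
  have hterm_ge : ∀ i : Fin T,
      ((i:ℕ)+1 : ℝ)/(((N - T : ℕ):ℝ) + (i:ℕ) + 1) ≤ ((i:ℕ)+1 : ℝ)/((v i : ℝ)+1) := by
    intro i
    apply div_le_div_of_nonneg_left (by positivity) (by positivity)
    have h := hvub i
    have h' : ((v i : ℕ):ℝ) ≤ ((N - T + (i:ℕ) : ℕ):ℝ) := by exact_mod_cast h
    push_cast at h'
    linarith
  -- max part
  have hsum_le : ∑ i : Fin T, ((i:ℕ)+1 : ℝ)/((v i : ℝ)+1) ≤ (T:ℝ) := by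
    calc ∑ i : Fin T, ((i:ℕ)+1 : ℝ)/((v i : ℝ)+1) ≤ ∑ _i : Fin T, (1:ℝ) :=
          Finset.sum_le_sum (fun i _ => hterm_le i)
      _ = (T:ℝ) := by simp
  have hmax : AP b ≤ 1 := by
    rw [hAP]
    calc (1/(T:ℝ)) * ∑ i : Fin T, ((i:ℕ)+1 : ℝ)/((v i : ℝ)+1) ≤ (1/(T:ℝ)) * (T:ℝ) :=
          mul_le_mul_of_nonneg_left hsum_le (by positivity)
      _ = 1 := by field_simp
  have hmax_iff : AP b = 1 ↔ Antitone b := by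
    rw [hAP, one_div, inv_mul_eq_div, div_eq_one_iff_eq hT0.ne']
    have hTsum : (T:ℝ) = ∑ _i : Fin T, (1:ℝ) := by simp
    rw [hTsum, Finset.sum_eq_sum_iff_of_le (fun i _ => hterm_le i)]
    constructor
    · intro h
      apply anti_of
      intro i
      have h3 := h i (Finset.mem_univ i)
      rw [div_eq_one_iff_eq (by positivity)] at h3
      have h4 : ((i:ℕ):ℝ) = ((v i : ℕ):ℝ) := by linarith
      exact (Nat.cast_injective h4).symm
    · intro hA i _
      have h5 := key_anti hA i
      rw [div_eq_one_iff_eq (by positivity), h5]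
  -- min sum rewriting
  have hmin_eq : ∑ i ∈ Finset.Icc 1 T, (i : ℝ) / (((N - T : ℕ):ℝ) + i) =
      ∑ i : Fin T, ((i:ℕ)+1 : ℝ)/(((N - T : ℕ):ℝ) + (i:ℕ) + 1) := by
    rw [← Finset.Ico_add_one_right_eq_Icc, Finset.sum_Ico_eq_sum_range]
    rw [Fin.sum_univ_eq_sum_range (fun j => ((j:ℕ)+1 : ℝ)/(((N - T : ℕ):ℝ) + (j:ℕ) + 1))]
    apply Finset.sum_congr (by norm_num)
    intro j _
    push_cast
    ring_nf
  have hsum_ge : ∑ i : Fin T, ((i:ℕ)+1 : ℝ)/(((N - T : ℕ):ℝ) + (i:ℕ) + 1) ≤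
      ∑ i : Fin T, ((i:ℕ)+1 : ℝ)/((v i : ℝ)+1) :=
    Finset.sum_le_sum (fun i _ => hterm_ge i)
  have hmin : (1 / (T : ℝ)) * ∑ i ∈ Finset.Icc 1 T, (i : ℝ) / (((N - T : ℕ):ℝ) + i) ≤ AP b := by
    rw [hAP, hmin_eq]
    exact mul_le_mul_of_nonneg_left hsum_ge (by positivity)
  have hmin_iff : AP b = (1 / (T : ℝ)) * ∑ i ∈ Finset.Icc 1 T, (i : ℝ) / (((N - T : ℕ):ℝ) + i)
      ↔ Monotone b := by
    rw [hAP, hmin_eq]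
    have hcancel : (1/(T:ℝ)) * ∑ i : Fin T, ((i:ℕ)+1 : ℝ)/((v i : ℝ)+1) =
        (1/(T:ℝ)) * ∑ i : Fin T, ((i:ℕ)+1 : ℝ)/(((N - T : ℕ):ℝ) + (i:ℕ) + 1) ↔
        ∑ i : Fin T, ((i:ℕ)+1 : ℝ)/(((N - T : ℕ):ℝ) + (i:ℕ) + 1) =
        ∑ i : Fin T, ((i:ℕ)+1 : ℝ)/((v i : ℝ)+1) := by
      constructor
      · intro h
        have := mul_left_cancel₀ (show (1/(T:ℝ)) ≠ 0 by positivity) h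
        exact this.symm
      · intro h; rw [h]
    rw [hcancel, Finset.sum_eq_sum_iff_of_le (fun i _ => hterm_ge i)]
    constructor
    · intro h
      apply mono_of
      intro i
      have h3 := h i (Finset.mem_univ i)
      have hnum : ((i:ℕ)+1 : ℝ) ≠ 0 := by positivity
      have h4 : ((v i : ℕ):ℝ) + 1 = ((N - T : ℕ):ℝ) + (i:ℕ) + 1 := by
        rw [div_eq_div_iff (by positivity) (by positivity)] at h3
        have h6 : ((i:ℕ)+1 : ℝ) * (((v i : ℕ):ℝ) + 1) =
            ((i:ℕ)+1 : ℝ) * (((N - T : ℕ):ℝ) + (i:ℕ) + 1) := by linarith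
        exact mul_left_cancel₀ hnum h6
      have h5 : ((v i : ℕ):ℝ) = ((N - T + (i:ℕ) : ℕ):ℝ) := by push_cast; linarith
      exact Nat.cast_injective h5
    · intro hM i _
      have h5 := key_mono hM i
      rw [h5]
      push_cast
      ring_nf
  exact ⟨⟨hmax, hmax_iff⟩, hmin, hmin_iff⟩
end

section
/- Adjacent swap monotonicity of AP: if b ∈ {0,1}^N has b_k = 0 and b_{k+1} = 1 for some k, then swapping these two entries strictly increases AP (assuming T ≥ 1). -/
open Finset

/-- Adjacent swap monotonicity: swapping an adjacent `(0,1)` pair to `(1,0)` strictly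
increases AP (the sequence has at least one true entry since `b (k+1) = true`). -/
theorem stmt10 {N : ℕ} (b : Fin N → Bool) (k : ℕ) (hk : k + 1 < N)
    (h0 : b ⟨k, Nat.lt_of_succ_lt hk⟩ = false) (h1 : b ⟨k + 1, hk⟩ = true)
    (hT : 1 ≤ numTrue b) :
    AP b < AP (b ∘ Equiv.swap ⟨k, Nat.lt_of_succ_lt hk⟩ ⟨k + 1, hk⟩) := by
  set i : Fin N := ⟨k, Nat.lt_of_succ_lt hk⟩ with hi
  set j : Fin N := ⟨k + 1, hk⟩ with hj
  have hij : i ≠ j := by simp [hi, hj, Fin.ext_iff]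
  set b' : Fin N → Bool := b ∘ Equiv.swap i j with hb'
  have hb'i : b' i = true := by simp [hb', h1]
  have hb'j : b' j = false := by simp [hb', h0]
  have hb'm : ∀ m, m ≠ i → m ≠ j → b' m = b m := fun m hm1 hm2 => by
    simp [hb', Equiv.swap_apply_of_ne_of_ne hm1 hm2]
  -- numTrue invariance
  have hT' : numTrue b' = numTrue b := by
    unfold numTrue
    apply Finset.card_equiv (Equiv.swap i j)
    intro m
    simp [hb']
  -- prefCount invariance off {i, j}
  have hle : ∀ m : Fin N, m ≠ i → m ≠ j → ∀ l : Fin N, Equiv.swap i j l ≤ m ↔ l ≤ m := by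
    intro m hmi hmj l
    have hmi' : (m : ℕ) ≠ k := fun h => hmi (Fin.ext h)
    have hmj' : (m : ℕ) ≠ k + 1 := fun h => hmj (Fin.ext h)
    rcases eq_or_ne l i with rfl | hli
    · rw [Equiv.swap_apply_left]
      simp only [Fin.le_def, hi, hj]
      omega
    rcases eq_or_ne l j with rfl | hlj
    · rw [Equiv.swap_apply_right]
      simp only [Fin.le_def, hi, hj]
      omega
    · rw [Equiv.swap_apply_of_ne_of_ne hli hlj]
  have hpc : ∀ m, m ≠ i → m ≠ j → prefCount b' m = prefCount b m := by
    intro m hmi hmj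
    unfold prefCount
    apply Finset.card_equiv (Equiv.swap i j)
    intro l
    simp only [mem_filter, mem_univ, true_and, hb', Function.comp_apply]
    exact and_congr_left' (hle m hmi hmj l).symm
  -- prefCount at the swap points
  have hset1 : Finset.univ.filter (fun l : Fin N => l ≤ j ∧ b l = true)
      = insert j (Finset.univ.filter (fun l : Fin N => l ≤ i ∧ b l = true)) := by
    ext l
    simp only [mem_insert, mem_filter, mem_univ, true_and]
    constructor
    · rintro ⟨hl, hbl⟩
      rcases eq_or_ne l j with rfl | hlj
      · exact Or.inl rfl
      · refine Or.inr ⟨?_, hbl⟩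
        have : (l : ℕ) ≠ k + 1 := fun h => hlj (Fin.ext h)
        simp only [Fin.le_def, hi, hj] at hl ⊢
        omega
    · rintro (rfl | ⟨hl, hbl⟩)
      · exact ⟨le_refl _, h1⟩
      · refine ⟨?_, hbl⟩
        simp only [Fin.le_def, hi, hj] at hl ⊢
        omega
  have hset2 : Finset.univ.filter (fun l : Fin N => l ≤ i ∧ b' l = true)
      = insert i (Finset.univ.filter (fun l : Fin N => l ≤ i ∧ b l = true)) := by
    ext l
    simp only [mem_insert, mem_filter, mem_univ, true_and]
    constructor
    · rintro ⟨hl, hbl⟩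
      rcases eq_or_ne l i with rfl | hli
      · exact Or.inl rfl
      · refine Or.inr ⟨hl, ?_⟩
        have hlj : l ≠ j := by
          intro h; subst h
          simp only [Fin.le_def, hi, hj] at hl
          omega
        rw [← hb'm l hli hlj]; exact hbl
    · rintro (rfl | ⟨hl, hbl⟩)
      · exact ⟨le_refl _, hb'i⟩
      · have hli : l ≠ i := by
          intro h; subst h; rw [h0] at hbl; exact Bool.noConfusion hbl
        have hlj : l ≠ j := by
          intro h; subst h
          simp only [Fin.le_def, hi, hj] at hl
          omega
        exact ⟨hl, by rw [hb'm l hli hlj]; exact hbl⟩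
  have hjnot : j ∉ Finset.univ.filter (fun l : Fin N => l ≤ i ∧ b l = true) := by
    simp only [mem_filter, mem_univ, true_and, not_and]
    intro hji
    simp only [Fin.le_def, hi, hj] at hji
    omega
  have hinot : i ∉ Finset.univ.filter (fun l : Fin N => l ≤ i ∧ b l = true) := by
    simp [h0, hi]; exact h0
  have hpcj : prefCount b j = prefCount b i + 1 := by
    unfold prefCount
    rw [hset1, Finset.card_insert_of_notMem hjnot]
  have hpci : prefCount b' i = prefCount b i + 1 := by
    unfold prefCount
    rw [hset2, Finset.card_insert_of_notMem hinot]
  set c : ℝ := (prefCount b i : ℝ) + 1 with hc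
  have hcpos : 0 < c := by positivity
  -- the sum difference
  have hsum : ∑ m ∈ Finset.univ.filter (fun m : Fin N => b' m = true),
        (prefCount b' m : ℝ) / ((m : ℕ) + 1)
      - ∑ m ∈ Finset.univ.filter (fun m : Fin N => b m = true),
        (prefCount b m : ℝ) / ((m : ℕ) + 1)
      = c / (k + 1) - c / (k + 2) := by
    rw [Finset.sum_filter, Finset.sum_filter, ← Finset.sum_sub_distrib]
    have : ∑ m : Fin N,
        ((if b' m = true then (prefCount b' m : ℝ) / ((m : ℕ) + 1) else 0)
          - (if b m = true then (prefCount b m : ℝ) / ((m : ℕ) + 1) else 0))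
        = ∑ m ∈ ({i, j} : Finset (Fin N)),
        ((if b' m = true then (prefCount b' m : ℝ) / ((m : ℕ) + 1) else 0)
          - (if b m = true then (prefCount b m : ℝ) / ((m : ℕ) + 1) else 0)) := by
      refine (Finset.sum_subset (Finset.subset_univ _) ?_).symm
      intro m _ hm
      simp only [mem_insert, mem_singleton, not_or] at hm
      rw [hb'm m hm.1 hm.2, hpc m hm.1 hm.2, sub_self]
    rw [this, Finset.sum_pair hij]
    rw [hb'i, hb'j, h0, hi, hj, h1, hpci, hpcj]
    simp only [if_true, if_false, Bool.false_eq_true]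
    push_cast
    simp only [hi, hj]
    ring
  -- conclude
  have hT0 : numTrue b ≠ 0 := by omega
  have hT0' : numTrue b' ≠ 0 := by rw [hT']; exact hT0
  rw [AP, AP, if_neg hT0, if_neg hT0', hT']
  apply mul_lt_mul_of_pos_left
  · have hlt : c / (k + 2 : ℝ) < c / (k + 1 : ℝ) := by
      exact div_lt_div_of_pos_left hcpos (by positivity) (by norm_num)
    linarith [hsum]
  · have : (0:ℝ) < (numTrue b : ℝ) := by exact_mod_cast Nat.lt_of_lt_of_le Nat.zero_lt_one hT
    positivity
end
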